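/- Let k ≥ 2 be an integer and let ξ1, ξ2, ξ3, ξ4 be real numbers with ξ1 + ξ2 + ξ3 + ξ4 = 0. Then Ω1(k) = ξ1ξ2 · [ − Σ_{i+j=2k−2} (ξ1^i + ξ2^i)(ξ1+ξ2)^j + Σ_{i+j=2k−2} ξ4^i (ξ2+ξ4)^j + Σ_{i+j=2k−2} ξ3^i (ξ2+ξ3)^j + Σ_{i+j=2k−1, i≥1, j≥1} (−1)^i ( ξ3^i Σ_{m+l=j−1} ξ4^m (ξ2+ξ4)^l − ξ4^j Σ_{m+l=i−1} ξ3^m (ξ2+ξ3)^l ) ]. -/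

import Mathlib

open Finset

private lemma sumA (a b : ℝ) (n : ℕ) :
    (a - b) * ∑ p ∈ antidiagonal n, a ^ p.1 * b ^ p.2 = a ^ (n + 1) - b ^ (n + 1) := by
  rw [Finset.Nat.sum_antidiagonal_eq_sum_range_succ_mk, mul_comm]
  simpa using geom_sum₂_mul a b (n + 1)

private lemma filter_split (n : ℕ) (hn : 1 ≤ n) (f : ℕ × ℕ → ℝ) :
    ∑ p ∈ (antidiagonal n).filter (fun p => 1 ≤ p.1 ∧ 1 ≤ p.2), f p
      = (∑ p ∈ antidiagonal n, f p) - f (0, n) - f (n, 0) := by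
  have h2 : (antidiagonal n).filter (fun p => ¬(1 ≤ p.1 ∧ 1 ≤ p.2)) = {(0, n), (n, 0)} := by
    ext p
    simp only [mem_filter, Finset.HasAntidiagonal.mem_antidiagonal, mem_insert, mem_singleton, Prod.ext_iff]
    omega
  have h3 := Finset.sum_filter_add_sum_filter_not (antidiagonal n)
    (fun p => 1 ≤ p.1 ∧ 1 ≤ p.2) f
  rw [h2] at h3
  have h4 : ((0, n) : ℕ × ℕ) ≠ (n, 0) := by
    simp only [ne_eq, Prod.ext_iff]
    omega
  rw [Finset.sum_pair h4] at h3
  linarith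

/-- Identity (3.21): for an integer `k ≥ 2` and reals with `ξ1 + ξ2 + ξ3 + ξ4 = 0`,
`Ω1(k)` factors as `ξ1 ξ2` times the explicit expression of (3.21). -/
theorem Omega1_div_xi1_xi2 (k : ℕ) (hk : 2 ≤ k) (ξ1 ξ2 ξ3 ξ4 : ℝ)
    (h : ξ1 + ξ2 + ξ3 + ξ4 = 0) :
    ξ1 ^ (2 * k) + ξ2 ^ (2 * k) + ξ3 ^ (2 * k) + ξ4 ^ (2 * k)
      - (ξ1 + ξ2) ^ (2 * k) - (ξ1 + ξ3) ^ (2 * k) - (ξ1 + ξ4) ^ (2 * k)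
    = ξ1 * ξ2 *
      ( - ∑ p ∈ antidiagonal (2 * k - 2), (ξ1 ^ p.1 + ξ2 ^ p.1) * (ξ1 + ξ2) ^ p.2
      + ∑ p ∈ antidiagonal (2 * k - 2), ξ4 ^ p.1 * (ξ2 + ξ4) ^ p.2
      + ∑ p ∈ antidiagonal (2 * k - 2), ξ3 ^ p.1 * (ξ2 + ξ3) ^ p.2
      + ∑ p ∈ (antidiagonal (2 * k - 1)).filter (fun p => 1 ≤ p.1 ∧ 1 ≤ p.2),
          (-1 : ℝ) ^ p.1 *
            ( ξ3 ^ p.1 * ∑ q ∈ antidiagonal (p.2 - 1), ξ4 ^ q.1 * (ξ2 + ξ4) ^ q.2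
            - ξ4 ^ p.2 * ∑ q ∈ antidiagonal (p.1 - 1), ξ3 ^ q.1 * (ξ2 + ξ3) ^ q.2 ) ) := by
  obtain ⟨m, rfl⟩ : ∃ m, k = m + 2 := ⟨k - 2, by omega⟩
  simp only [show 2 * (m + 2) = 2 * m + 4 from by omega,
    show 2 * m + 4 - 2 = 2 * m + 2 from by omega,
    show 2 * m + 4 - 1 = 2 * m + 3 from by omega]
  -- even/odd power facts
  have heven : Even (2 * m + 4) := ⟨m + 2, by ring⟩
  have hodd3 : (-ξ3) ^ (2 * m + 3) = -ξ3 ^ (2 * m + 3) := Odd.neg_pow ⟨m + 1, by ring⟩ _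
  have hodd4 : (-ξ4) ^ (2 * m + 3) = -ξ4 ^ (2 * m + 3) := Odd.neg_pow ⟨m + 1, by ring⟩ _
  have hneg3 : (-ξ3) ^ (2 * m + 4) = ξ3 ^ (2 * m + 4) := heven.neg_pow _
  have hneg4 : (-ξ4) ^ (2 * m + 4) = ξ4 ^ (2 * m + 4) := heven.neg_pow _
  have hp1 : (ξ1 + ξ3) ^ (2 * m + 4) = (ξ2 + ξ4) ^ (2 * m + 4) := by
    rw [show ξ1 + ξ3 = -(ξ2 + ξ4) from by linarith, heven.neg_pow]
  have hp2 : (ξ1 + ξ4) ^ (2 * m + 4) = (ξ2 + ξ3) ^ (2 * m + 4) := by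
    rw [show ξ1 + ξ4 = -(ξ2 + ξ3) from by linarith, heven.neg_pow]
  -- split the first sum
  have hS1 : ∑ p ∈ antidiagonal (2 * m + 2), (ξ1 ^ p.1 + ξ2 ^ p.1) * (ξ1 + ξ2) ^ p.2
      = (∑ p ∈ antidiagonal (2 * m + 2), ξ1 ^ p.1 * (ξ1 + ξ2) ^ p.2)
      + ∑ p ∈ antidiagonal (2 * m + 2), ξ2 ^ p.1 * (ξ1 + ξ2) ^ p.2 := by
    rw [← sum_add_distrib]
    exact sum_congr rfl fun p _ => by ring
  rw [hS1, hp1, hp2]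
  -- the four plain geometric sums
  have h1 := sumA ξ1 (ξ1 + ξ2) (2 * m + 2)
  have h2 := sumA ξ2 (ξ1 + ξ2) (2 * m + 2)
  have h3 := sumA ξ4 (ξ2 + ξ4) (2 * m + 2)
  have h4 := sumA ξ3 (ξ2 + ξ3) (2 * m + 2)
  have h5 := sumA (-ξ3) (ξ2 + ξ4) (2 * m + 3)
  have h6 := sumA (ξ2 + ξ3) (-ξ4) (2 * m + 3)
  -- pointwise computation on the filtered sum
  have hfilt : ∀ p ∈ (antidiagonal (2 * m + 3)).filter (fun p => 1 ≤ p.1 ∧ 1 ≤ p.2),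
      ξ2 * ((-1 : ℝ) ^ p.1 *
        ( ξ3 ^ p.1 * ∑ q ∈ antidiagonal (p.2 - 1), ξ4 ^ q.1 * (ξ2 + ξ4) ^ q.2
        - ξ4 ^ p.2 * ∑ q ∈ antidiagonal (p.1 - 1), ξ3 ^ q.1 * (ξ2 + ξ3) ^ q.2 ))
      = (-ξ3) ^ p.1 * (ξ2 + ξ4) ^ p.2 + (ξ2 + ξ3) ^ p.1 * (-ξ4) ^ p.2 := by
    rintro ⟨i, j⟩ hp
    simp only [mem_filter, Finset.HasAntidiagonal.mem_antidiagonal] at hp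
    obtain ⟨hij, hi, hj⟩ := hp
    have hU := sumA ξ4 (ξ2 + ξ4) (j - 1)
    have hV := sumA ξ3 (ξ2 + ξ3) (i - 1)
    rw [show j - 1 + 1 = j from by omega] at hU
    rw [show i - 1 + 1 = i from by omega] at hV
    have hU2 : ξ2 * ∑ q ∈ antidiagonal (j - 1), ξ4 ^ q.1 * (ξ2 + ξ4) ^ q.2
        = (ξ2 + ξ4) ^ j - ξ4 ^ j := by linear_combination -hU
    have hV2 : ξ2 * ∑ q ∈ antidiagonal (i - 1), ξ3 ^ q.1 * (ξ2 + ξ3) ^ q.2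
        = (ξ2 + ξ3) ^ i - ξ3 ^ i := by linear_combination -hV
    have hsign : (-1 : ℝ) ^ i * (-1 : ℝ) ^ j = -1 := by
      rw [← pow_add, hij]
      have : Odd (2 * m + 3) := ⟨m + 1, by ring⟩
      simp [this.neg_one_pow]
    have hsq : ((-1 : ℝ) ^ i) ^ 2 = 1 := by
      rw [← pow_mul, mul_comm, pow_mul]
      simp
    have hj2 : (-1 : ℝ) ^ j = -(-1 : ℝ) ^ i := by
      linear_combination ((-1 : ℝ) ^ i) * hsign - ((-1 : ℝ) ^ j) * hsq
    have h3i : (-ξ3) ^ i = (-1 : ℝ) ^ i * ξ3 ^ i := by rw [neg_pow]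
    have h4j : (-ξ4) ^ j = (-1 : ℝ) ^ j * ξ4 ^ j := by rw [neg_pow]
    simp only [h3i, h4j, hj2]
    linear_combination ((-1 : ℝ) ^ i * ξ3 ^ i) * hU2 - ((-1 : ℝ) ^ i * ξ4 ^ j) * hV2
  have hF0 : ξ2 * ∑ p ∈ (antidiagonal (2 * m + 3)).filter (fun p => 1 ≤ p.1 ∧ 1 ≤ p.2),
      (-1 : ℝ) ^ p.1 *
        ( ξ3 ^ p.1 * ∑ q ∈ antidiagonal (p.2 - 1), ξ4 ^ q.1 * (ξ2 + ξ4) ^ q.2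
        - ξ4 ^ p.2 * ∑ q ∈ antidiagonal (p.1 - 1), ξ3 ^ q.1 * (ξ2 + ξ3) ^ q.2 )
      = ∑ p ∈ (antidiagonal (2 * m + 3)).filter (fun p => 1 ≤ p.1 ∧ 1 ≤ p.2),
          ((-ξ3) ^ p.1 * (ξ2 + ξ4) ^ p.2 + (ξ2 + ξ3) ^ p.1 * (-ξ4) ^ p.2) := by
    rw [mul_sum]
    exact sum_congr rfl hfilt
  rw [filter_split (2 * m + 3) (by omega)
    (fun p => (-ξ3) ^ p.1 * (ξ2 + ξ4) ^ p.2 + (ξ2 + ξ3) ^ p.1 * (-ξ4) ^ p.2),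
    sum_add_distrib] at hF0
  simp only [pow_zero, one_mul, mul_one, hodd3, hodd4] at hF0
  have ha : ξ1 * ξ2 * ∑ p ∈ antidiagonal (2 * m + 2), ξ1 ^ p.1 * (ξ1 + ξ2) ^ p.2
      = ξ1 * (ξ1 + ξ2) ^ (2 * m + 3) - ξ1 * ξ1 ^ (2 * m + 3) := by
    linear_combination (-ξ1) * h1
  have hb : ξ1 * ξ2 * ∑ p ∈ antidiagonal (2 * m + 2), ξ2 ^ p.1 * (ξ1 + ξ2) ^ p.2
      = ξ2 * (ξ1 + ξ2) ^ (2 * m + 3) - ξ2 * ξ2 ^ (2 * m + 3) := by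
    linear_combination (-ξ2) * h2
  have hc : ξ1 * ξ2 * ∑ p ∈ antidiagonal (2 * m + 2), ξ4 ^ p.1 * (ξ2 + ξ4) ^ p.2
      = ξ1 * (ξ2 + ξ4) ^ (2 * m + 3) - ξ1 * ξ4 ^ (2 * m + 3) := by
    linear_combination (-ξ1) * h3
  have hd : ξ1 * ξ2 * ∑ p ∈ antidiagonal (2 * m + 2), ξ3 ^ p.1 * (ξ2 + ξ3) ^ p.2
      = ξ1 * (ξ2 + ξ3) ^ (2 * m + 3) - ξ1 * ξ3 ^ (2 * m + 3) := by
    linear_combination (-ξ1) * h4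
  have he : ξ1 * ∑ p ∈ antidiagonal (2 * m + 3), (-ξ3) ^ p.1 * (ξ2 + ξ4) ^ p.2
      = ξ3 ^ (2 * m + 4) - (ξ2 + ξ4) ^ (2 * m + 4) := by
    linear_combination h5 + (∑ p ∈ antidiagonal (2 * m + 3), (-ξ3) ^ p.1 * (ξ2 + ξ4) ^ p.2) * h
      + hneg3
  have hf : ξ1 * ∑ p ∈ antidiagonal (2 * m + 3), (ξ2 + ξ3) ^ p.1 * (-ξ4) ^ p.2
      = ξ4 ^ (2 * m + 4) - (ξ2 + ξ3) ^ (2 * m + 4) := by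
    linear_combination -h6 + (∑ p ∈ antidiagonal (2 * m + 3), (ξ2 + ξ3) ^ p.1 * (-ξ4) ^ p.2) * h
      + hneg4
  have hF2 : ξ1 * ξ2 * ∑ p ∈ (antidiagonal (2 * m + 3)).filter (fun p => 1 ≤ p.1 ∧ 1 ≤ p.2),
      (-1 : ℝ) ^ p.1 *
        ( ξ3 ^ p.1 * ∑ q ∈ antidiagonal (p.2 - 1), ξ4 ^ q.1 * (ξ2 + ξ4) ^ q.2
        - ξ4 ^ p.2 * ∑ q ∈ antidiagonal (p.1 - 1), ξ3 ^ q.1 * (ξ2 + ξ3) ^ q.2 )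
      = ξ3 ^ (2 * m + 4) - (ξ2 + ξ4) ^ (2 * m + 4) + ξ4 ^ (2 * m + 4) - (ξ2 + ξ3) ^ (2 * m + 4)
        - ξ1 * (ξ2 + ξ4) ^ (2 * m + 3) + ξ1 * ξ4 ^ (2 * m + 3)
        + ξ1 * ξ3 ^ (2 * m + 3) - ξ1 * (ξ2 + ξ3) ^ (2 * m + 3) := by
    linear_combination ξ1 * hF0 + he + hf
  linear_combination ha + hb - hc - hd - hF2
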